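/- Parametrization of the ξ-family of critical values of the spatial Euler problem (with a = 1): fix h, g, l ∈ ℝ and ξ₀ > 1, write μ = μ₁ + μ₂, and define R(ξ) = (ξ² − 1)(2hξ² + 2μξ − 2g) − l². Then R(ξ₀) = 0 and R'(ξ₀) = 0 if and only if g = h(2ξ₀² − 1) + μ(3ξ₀² − 1)/(2ξ₀) and l² = −(μ + 2hξ₀)(ξ₀² − 1)²/ξ₀. -/

import Mathlib

/-- Parametrization of the `ξ`-family of critical values of the spatial
Euler problem (`a = 1`, `μ = μ₁ + μ₂`): for `ξ₀ > 1` and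
`R(ξ) = (ξ²−1)(2hξ² + 2μξ − 2g) − l²`, one has `R(ξ₀) = 0 ∧ R'(ξ₀) = 0` iff
`g = h(2ξ₀²−1) + μ(3ξ₀²−1)/(2ξ₀)` and `l² = −(μ + 2hξ₀)(ξ₀²−1)²/ξ₀`. -/
theorem statement9 (μ1 μ2 h g l ξ0 : ℝ) (hξ : 1 < ξ0) :
    ((ξ0 ^ 2 - 1) * (2 * h * ξ0 ^ 2 + 2 * (μ1 + μ2) * ξ0 - 2 * g) - l ^ 2 = 0 ∧
      deriv (fun ξ : ℝ =>
        (ξ ^ 2 - 1) * (2 * h * ξ ^ 2 + 2 * (μ1 + μ2) * ξ - 2 * g) - l ^ 2) ξ0 = 0) ↔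
    (g = h * (2 * ξ0 ^ 2 - 1) + (μ1 + μ2) * (3 * ξ0 ^ 2 - 1) / (2 * ξ0) ∧
      l ^ 2 = -((μ1 + μ2) + 2 * h * ξ0) * (ξ0 ^ 2 - 1) ^ 2 / ξ0) := by
  have h0 : ξ0 ≠ 0 := by linarith
  have hd : deriv (fun ξ : ℝ =>
      (ξ ^ 2 - 1) * (2 * h * ξ ^ 2 + 2 * (μ1 + μ2) * ξ - 2 * g) - l ^ 2) ξ0
      = 2 * ξ0 * (2 * h * ξ0 ^ 2 + 2 * (μ1 + μ2) * ξ0 - 2 * g)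
        + (ξ0 ^ 2 - 1) * (4 * h * ξ0 + 2 * (μ1 + μ2)) := by
    have : HasDerivAt (fun ξ : ℝ =>
        (ξ ^ 2 - 1) * (2 * h * ξ ^ 2 + 2 * (μ1 + μ2) * ξ - 2 * g) - l ^ 2)
        (2 * ξ0 * (2 * h * ξ0 ^ 2 + 2 * (μ1 + μ2) * ξ0 - 2 * g)
          + (ξ0 ^ 2 - 1) * (4 * h * ξ0 + 2 * (μ1 + μ2))) ξ0 := by
      have h1 : HasDerivAt (fun ξ : ℝ => ξ ^ 2 - 1) (2 * ξ0) ξ0 := by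
        simpa using ((hasDerivAt_pow 2 ξ0).sub_const 1)
      have h2 : HasDerivAt (fun ξ : ℝ => 2 * h * ξ ^ 2 + 2 * (μ1 + μ2) * ξ - 2 * g)
          (4 * h * ξ0 + 2 * (μ1 + μ2)) ξ0 := by
        have := (((hasDerivAt_pow 2 ξ0).const_mul (2 * h)).add
          ((hasDerivAt_id ξ0).const_mul (2 * (μ1 + μ2)))).sub_const (2 * g)
        exact (this.congr_deriv (by rw [show (2:ℕ) - 1 = 1 by norm_num]; push_cast; ring)).congr_of_eventuallyEq
          (Filter.Eventually.of_forall fun x => by simp)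
      simpa using (h1.mul h2).sub_const (l ^ 2)
    exact this.deriv
  rw [hd]
  constructor
  · rintro ⟨e1, e2⟩
    have hg : g = h * (2 * ξ0 ^ 2 - 1) + (μ1 + μ2) * (3 * ξ0 ^ 2 - 1) / (2 * ξ0) := by
      field_simp
      linarith [e2]
    refine ⟨hg, ?_⟩
    field_simp
    subst hg
    field_simp at e1
    nlinarith [e1]
  · rintro ⟨hg, hl⟩
    subst hg
    constructor
    · rw [hl]; field_simp; ring
    · field_simp; ring
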